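/- Set r = (1−ε) + ε · max_{u∈V} ∑_{y∈V} tanh(β |J_{u,y}| / 2) and suppose r < 1. Then for all spin configurations σ, τ ∈ {-1,+1}^V and every t ∈ ℕ, the t-step distributions of the ε-SCA satisfy ‖P^t_{β,ε}(σ,·) − P^t_{β,ε}(τ,·)‖_TV ≤ r^t · |V|, where P^t denotes the t-fold product of the transition kernel and ‖μ−ν‖_TV = (1/2) ∑_{η ∈ {-1,+1}^V} |μ(η) − ν(η)| is the total variation distance. -/

import Mathlib

open Real Finset

variable {V : Type*}

/-- The real value of a Boolean spin: `true ↦ +1`, `false ↦ -1`. -/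
def sp (b : Bool) : ℝ := if b then 1 else -1

/-- The cavity field `h̃_x(σ) = ∑_y J_{x,y} σ_y + h_x`. -/
noncomputable def cavity [Fintype V] (J : V → V → ℝ) (h : V → ℝ) (σ : V → Bool) (x : V) : ℝ :=
  (∑ y, J x y * sp (σ y)) + h x

/-- The ε-SCA flip probability `p_x(σ) = e^{-(β/2) h̃_x(σ) σ_x} / (2 cosh((β/2) h̃_x(σ)))`. -/
noncomputable def flipProb [Fintype V] (J : V → V → ℝ) (h : V → ℝ) (β : ℝ)
    (σ : V → Bool) (x : V) : ℝ :=
  Real.exp (-(β / 2) * cavity J h σ x * sp (σ x)) / (2 * Real.cosh ((β / 2) * cavity J h σ x))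

/-- The ε-SCA transition kernel
`P_{β,ε}(σ,τ) = ∏_{x : τ_x = -σ_x} ε p_x(σ) · ∏_{y : τ_y = σ_y} (1 - ε p_y(σ))`. -/
noncomputable def Peps [Fintype V] [DecidableEq V] (J : V → V → ℝ) (h : V → ℝ) (β ε : ℝ)
    (σ τ : V → Bool) : ℝ :=
  (∏ x ∈ univ.filter (fun x => τ x ≠ σ x), ε * flipProb J h β σ x) *
    ∏ y ∈ univ.filter (fun y => τ y = σ y), (1 - ε * flipProb J h β σ y)

/-- The t-fold product (t-step transition probabilities) of a kernel P on configurations. -/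
noncomputable def kpow [Fintype V] [DecidableEq V]
    (P : (V → Bool) → (V → Bool) → ℝ) : ℕ → (V → Bool) → (V → Bool) → ℝ
  | 0 => fun σ τ => if σ = τ then 1 else 0
  | n + 1 => fun σ τ => ∑ η, P σ η * kpow P n η τ

/-- Total variation distance `‖μ−ν‖_TV = (1/2) ∑_η |μ(η) − ν(η)|`. -/
noncomputable def tvDist [Fintype V] [DecidableEq V] (μ ν : (V → Bool) → ℝ) : ℝ :=
  (1 / 2) * ∑ η, |μ η - ν η|


set_option linter.unusedSectionVars false


lemma abs_tanh_le_one (x : ℝ) : |Real.tanh x| ≤ 1 := by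
  rw [Real.tanh_eq_sinh_div_cosh, abs_div, abs_of_pos (Real.cosh_pos x),
    div_le_one (Real.cosh_pos x)]
  nlinarith [Real.sinh_sq x, abs_nonneg (Real.sinh x), sq_abs (Real.sinh x), Real.cosh_pos x]

lemma tanh_nonneg' {x : ℝ} (hx : 0 ≤ x) : 0 ≤ Real.tanh x := by
  rw [Real.tanh_eq_sinh_div_cosh]
  exact div_nonneg (Real.sinh_nonneg_iff.2 hx) (Real.cosh_pos x).le

lemma tanh_sub_le (a b : ℝ) (hab : b ≤ a) :
    Real.tanh a - Real.tanh b ≤ 2 * Real.tanh ((a - b) / 2) := by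
  have hca := Real.cosh_pos a
  have hcb := Real.cosh_pos b
  have hch := Real.cosh_pos ((a - b) / 2)
  have h1 : Real.tanh a - Real.tanh b = Real.sinh (a - b) / (Real.cosh a * Real.cosh b) := by
    rw [Real.tanh_eq_sinh_div_cosh, Real.tanh_eq_sinh_div_cosh,
      div_sub_div _ _ hca.ne' hcb.ne', Real.sinh_sub]
  have h2 : Real.cosh ((a - b) / 2) ^ 2 ≤ Real.cosh a * Real.cosh b := by
    have e1 : Real.cosh a * Real.cosh b = (Real.cosh (a + b) + Real.cosh (a - b)) / 2 := by
      rw [Real.cosh_add, Real.cosh_sub]; ring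
    have e2 : Real.cosh (a - b) = 2 * Real.cosh ((a - b) / 2) ^ 2 - 1 := by
      have := Real.cosh_two_mul ((a - b) / 2)
      have h3 := Real.cosh_sq_sub_sinh_sq ((a - b) / 2)
      have : Real.cosh (2 * ((a - b) / 2)) = Real.cosh ((a-b)/2) ^ 2 + Real.sinh ((a-b)/2) ^ 2 := this
      rw [show 2 * ((a - b) / 2) = a - b by ring] at this
      linarith
    nlinarith [Real.one_le_cosh (a + b)]
  have h4 : Real.sinh (a - b) = 2 * Real.sinh ((a - b) / 2) * Real.cosh ((a - b) / 2) := by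
    rw [← Real.sinh_two_mul, show 2 * ((a - b) / 2) = a - b by ring]
  have hs : 0 ≤ Real.sinh ((a - b) / 2) := Real.sinh_nonneg_iff.2 (by linarith)
  rw [h1, h4, Real.tanh_eq_sinh_div_cosh]
  have e3 : 2 * (Real.sinh ((a-b)/2) / Real.cosh ((a-b)/2))
      = 2 * Real.sinh ((a-b)/2) * Real.cosh ((a-b)/2) / (Real.cosh ((a-b)/2) ^2) := by
    field_simp
  rw [e3]
  gcongr

lemma tanh_mono' {a b : ℝ} (hab : b ≤ a) : Real.tanh b ≤ Real.tanh a := by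
  have hca := Real.cosh_pos a
  have hcb := Real.cosh_pos b
  have h1 : Real.tanh a - Real.tanh b = Real.sinh (a - b) / (Real.cosh a * Real.cosh b) := by
    rw [Real.tanh_eq_sinh_div_cosh, Real.tanh_eq_sinh_div_cosh,
      div_sub_div _ _ hca.ne' hcb.ne', Real.sinh_sub]
  have hs : 0 ≤ Real.sinh (a - b) := Real.sinh_nonneg_iff.2 (by linarith)
  nlinarith [div_nonneg hs (mul_pos hca hcb).le]

lemma abs_tanh_sub_le (a b : ℝ) : |Real.tanh a - Real.tanh b| ≤ 2 * Real.tanh (|a - b| / 2) := by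
  rcases le_total b a with hab | hab
  · rw [abs_of_nonneg (sub_nonneg.2 (tanh_mono' hab)), abs_of_nonneg (by linarith)]
    exact tanh_sub_le a b hab
  · rw [abs_of_nonpos (sub_nonpos.2 (tanh_mono' hab)), abs_of_nonpos (by linarith)]
    have := tanh_sub_le b a hab
    have : Real.tanh b - Real.tanh a ≤ 2 * Real.tanh ((b - a) / 2) := this
    rw [show -(a-b)/2 = (b-a)/2 by ring]
    linarith

lemma flipProb_eq [Fintype V] (J : V → V → ℝ) (h : V → ℝ) (β : ℝ) (σ : V → Bool) (x : V) :
    flipProb J h β σ x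
      = (1 - sp (σ x) * Real.tanh (β / 2 * cavity J h σ x)) / 2 := by
  unfold flipProb
  have hcosh := Real.cosh_pos (β / 2 * cavity J h σ x)
  rw [Real.tanh_eq_sinh_div_cosh]
  cases hb : σ x <;> simp only [sp, if_true, if_false, Bool.false_eq_true]
  · rw [show -(β / 2) * cavity J h σ x * (-1) = β / 2 * cavity J h σ x by ring,
      ← Real.cosh_add_sinh]
    field_simp; ring
  · rw [show -(β / 2) * cavity J h σ x * 1 = -(β / 2 * cavity J h σ x) by ring,
      ← Real.cosh_sub_sinh]
    field_simp

lemma flipProb_nonneg [Fintype V] (J : V → V → ℝ) (h : V → ℝ) (β : ℝ) (σ : V → Bool) (x : V) :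
    0 ≤ flipProb J h β σ x := by
  unfold flipProb
  have := Real.cosh_pos (β / 2 * cavity J h σ x)
  positivity

lemma flipProb_le_one [Fintype V] (J : V → V → ℝ) (h : V → ℝ) (β : ℝ) (σ : V → Bool) (x : V) :
    flipProb J h β σ x ≤ 1 := by
  rw [flipProb_eq]
  have := abs_tanh_le_one (β / 2 * cavity J h σ x)
  have habs := abs_le.1 this
  cases hb : σ x <;> simp only [sp, if_true, if_false, Bool.false_eq_true] <;> push_cast <;> nlinarith [habs.1, habs.2]

/-- one-site kernel -/

noncomputable def siteK [Fintype V] (J : V → V → ℝ) (h : V → ℝ) (β ε : ℝ)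
    (σ : V → Bool) (y : V) (b : Bool) : ℝ :=
  if b = σ y then 1 - ε * flipProb J h β σ y else ε * flipProb J h β σ y

lemma siteK_nonneg [Fintype V] (J : V → V → ℝ) (h : V → ℝ) (β ε : ℝ)
    (hε0 : 0 ≤ ε) (hε1 : ε ≤ 1) (σ : V → Bool) (y : V) (b : Bool) :
    0 ≤ siteK J h β ε σ y b := by
  unfold siteK
  have h1 := flipProb_nonneg J h β σ y
  have h2 := flipProb_le_one J h β σ y
  split <;> nlinarith

lemma siteK_sum [Fintype V] (J : V → V → ℝ) (h : V → ℝ) (β ε : ℝ) (σ : V → Bool) (y : V) :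
    siteK J h β ε σ y true + siteK J h β ε σ y false = 1 := by
  unfold siteK
  cases hb : σ y <;> simp

lemma Peps_eq_prod [Fintype V] [DecidableEq V] (J : V → V → ℝ) (h : V → ℝ) (β ε : ℝ)
    (σ τ : V → Bool) :
    Peps J h β ε σ τ = ∏ y, siteK J h β ε σ y (τ y) := by
  rw [← Finset.prod_filter_mul_prod_filter_not univ (fun y => τ y = σ y)
    (fun y => siteK J h β ε σ y (τ y)), Peps, mul_comm]
  congr 1
  · exact Finset.prod_congr rfl (fun y hy => by
      simp only [mem_filter] at hy
      simp [siteK, hy.2])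
  · exact Finset.prod_congr rfl (fun y hy => by
      simp only [mem_filter] at hy
      simp [siteK, hy.2])

lemma sum_prod_bool [Fintype V] [DecidableEq V] (G : V → Bool → ℝ) :
    ∑ τ : V → Bool, ∏ y, G y (τ y) = ∏ y, (G y true + G y false) := by
  have : ∀ y : V, G y true + G y false = ∑ b : Bool, G y b := by
    intro y; simp [Fintype.sum_bool]
  simp_rw [this]
  rw [Finset.prod_univ_sum]
  rw [Fintype.piFinset_univ]

lemma flip_involutive [DecidableEq V] (x : V) :
    Function.Involutive (fun τ : V → Bool => Function.update τ x (!(τ x))) := by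
  intro τ
  simp [Function.update_idem]

lemma single_site [Fintype V] [DecidableEq V] (x : V) (g : Bool → ℝ)
    (hg : g true + g false = 0)
    (W : (V → Bool) → ℝ) (hW0 : ∀ τ, 0 ≤ W τ)
    (hWx : ∀ τ b, W (Function.update τ x b) = W τ)
    (hWsum : ∑ τ, W τ = 2)
    (f : (V → Bool) → ℝ) (c : ℝ)
    (hf : ∀ ρ, |f (Function.update ρ x true) - f (Function.update ρ x false)| ≤ c) :
    |∑ τ, g (τ x) * W τ * f τ| ≤ |g true| * c := by
  set F : (V → Bool) → ℝ := fun τ => g (τ x) * W τ * f τ with hF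
  have hsum2 : 2 * ∑ τ, F τ
      = ∑ τ, (F (Function.update τ x true) + F (Function.update τ x false)) := by
    have he : ∑ τ, F (Function.Involutive.toPerm _ (flip_involutive x) τ) = ∑ τ, F τ :=
      Equiv.sum_comp _ F
    calc 2 * ∑ τ, F τ = ∑ τ, F τ + ∑ τ, F (Function.Involutive.toPerm _ (flip_involutive x) τ) := by
          rw [he]; ring
      _ = ∑ τ, (F τ + F (Function.Involutive.toPerm _ (flip_involutive x) τ)) := by rw [Finset.sum_add_distrib]
      _ = _ := by
          apply Finset.sum_congr rfl
          intro τ _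
          have : Function.Involutive.toPerm _ (flip_involutive x) τ = Function.update τ x (!(τ x)) := rfl
          rw [this]
          cases hb : τ x
          · have h1 : Function.update τ x false = τ := by
              rw [← hb]; exact Function.update_eq_self x τ
            simp only [Bool.not_false]
            rw [← h1]
            simp only [Function.update_idem]
            ring
          · have h1 : Function.update τ x true = τ := by
              rw [← hb]; exact Function.update_eq_self x τ
            simp only [Bool.not_true]
            rw [← h1]
            simp only [Function.update_idem]
            try ring
  have hgf : g false = - g true := by linarith
  have key : ∀ τ, F (Function.update τ x true) + F (Function.update τ x false)
      = g true * W τ * (f (Function.update τ x true) - f (Function.update τ x false)) := by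
    intro τ
    simp only [hF, Function.update_self, hWx, hgf]
    ring
  have : |2 * ∑ τ, F τ| ≤ ∑ τ, |g true| * W τ * c := by
    rw [hsum2]
    refine (Finset.abs_sum_le_sum_abs _ _).trans ?_
    apply Finset.sum_le_sum
    intro τ _
    rw [key τ, abs_mul, abs_mul, abs_of_nonneg (hW0 τ)]
    have hc : 0 ≤ c := le_trans (abs_nonneg _) (hf τ)
    exact mul_le_mul_of_nonneg_left (hf τ) (mul_nonneg (abs_nonneg _) (hW0 τ))
  have h2 : ∑ τ, |g true| * W τ * c = |g true| * c * 2 := by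
    calc ∑ τ, |g true| * W τ * c = |g true| * c * ∑ τ, W τ := by
          rw [Finset.mul_sum]; exact Finset.sum_congr rfl fun τ _ => by ring
      _ = |g true| * c * 2 := by rw [hWsum]
  rw [h2] at this
  rw [abs_mul, abs_two] at this
  have hc : 0 ≤ c := le_trans (abs_nonneg _) (hf (fun _ => true))
  linarith

lemma hybrid_bound [Fintype V] [DecidableEq V] (q q' : V → Bool → ℝ)
    (hq0 : ∀ y b, 0 ≤ q y b) (hq'0 : ∀ y b, 0 ≤ q' y b)
    (hq1 : ∀ y, q y true + q y false = 1) (hq'1 : ∀ y, q' y true + q' y false = 1)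
    (f : (V → Bool) → ℝ) (c : ℝ)
    (hf : ∀ x ρ, |f (Function.update ρ x true) - f (Function.update ρ x false)| ≤ c)
    (S : Finset V) :
    |(∑ τ : V → Bool, ((∏ y ∈ S, q' y (τ y)) * ∏ y ∈ Sᶜ, q y (τ y)) * f τ)
      - ∑ τ : V → Bool, (∏ y, q y (τ y)) * f τ|
    ≤ (∑ y ∈ S, |q' y true - q y true|) * c := by
  induction S using Finset.induction_on with
  | empty => simp
  | @insert x S hx ih =>
    set W : (V → Bool) → ℝ :=
      fun τ => (∏ y ∈ S, q' y (τ y)) * ∏ y ∈ (insert x S)ᶜ, q y (τ y) with hW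
    have hxc : x ∈ Sᶜ := by simp [Finset.mem_compl, hx]
    have hcompl : Sᶜ = insert x ((insert x S)ᶜ) := by
      rw [Finset.compl_insert, Finset.insert_erase hxc]
    have hxnc : x ∉ (insert x S)ᶜ := by simp
    have key1 : ∀ τ : V → Bool,
        (∏ y ∈ insert x S, q' y (τ y)) * ∏ y ∈ (insert x S)ᶜ, q y (τ y)
        = q' x (τ x) * W τ := by
      intro τ; rw [Finset.prod_insert hx, hW]; ring
    have key2 : ∀ τ : V → Bool,
        (∏ y ∈ S, q' y (τ y)) * ∏ y ∈ Sᶜ, q y (τ y) = q x (τ x) * W τ := by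
      intro τ
      rw [hcompl, Finset.prod_insert hxnc, hW]; ring
    have hdiff :
        (∑ τ : V → Bool, ((∏ y ∈ insert x S, q' y (τ y)) * ∏ y ∈ (insert x S)ᶜ, q y (τ y)) * f τ)
          - ∑ τ : V → Bool, ((∏ y ∈ S, q' y (τ y)) * ∏ y ∈ Sᶜ, q y (τ y)) * f τ
        = ∑ τ : V → Bool, (q' x (τ x) - q x (τ x)) * W τ * f τ := by
      rw [← Finset.sum_sub_distrib]
      refine Finset.sum_congr rfl fun τ _ => ?_
      rw [key1, key2]; ring
    have hG : ∀ τ : V → Bool,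
        W τ = ∏ y, (fun y => if y ∈ S then q' y else if y = x then (fun _ => (1:ℝ)) else q y) y (τ y) := by
      intro τ
      rw [← Finset.prod_mul_prod_compl (insert x S)
        (fun y => (fun y => if y ∈ S then q' y else if y = x then (fun _ => (1:ℝ)) else q y) y (τ y))]
      show (∏ y ∈ S, q' y (τ y)) * ∏ y ∈ (insert x S)ᶜ, q y (τ y)
          = (∏ y ∈ insert x S,
              (if y ∈ S then q' y else if y = x then (fun _ => (1:ℝ)) else q y) (τ y))
            * ∏ y ∈ (insert x S)ᶜ,
              (if y ∈ S then q' y else if y = x then (fun _ => (1:ℝ)) else q y) (τ y)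
      refine congrArg₂ (· * ·) ?_ ?_
      · rw [Finset.prod_insert hx]
        have hxval : (if x ∈ S then q' x else if x = x then (fun _ => (1:ℝ)) else q x) (τ x) = 1 := by
          simp [hx]
        rw [hxval, one_mul]
        exact Finset.prod_congr rfl fun y hy => by simp [hy]
      · refine Finset.prod_congr rfl fun y hy => ?_
        rw [Finset.mem_compl, Finset.mem_insert] at hy
        push_neg at hy
        simp [hy.1, hy.2]
    have hWsum : ∑ τ : V → Bool, W τ = 2 := by
      have := sum_prod_bool
        (fun y => if y ∈ S then q' y else if y = x then (fun _ => (1:ℝ)) else q y) (V := V)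
      simp_rw [hG]
      rw [this]
      have : ∀ y : V,
          ((if y ∈ S then q' y else if y = x then (fun _ => (1:ℝ)) else q y) true
            + (if y ∈ S then q' y else if y = x then (fun _ => (1:ℝ)) else q y) false)
          = if y = x then 2 else 1 := by
        intro y
        by_cases hyS : y ∈ S
        · have : y ≠ x := fun hxy => hx (hxy ▸ hyS)
          simp [hyS, this, hq'1 y]
        · by_cases hyx : y = x
          · subst hyx; simp [hx]; norm_num
          · simp [hyS, hyx, hq1 y]
      simp_rw [this]
      simp [Finset.prod_ite_eq']
    have hc : 0 ≤ c := le_trans (abs_nonneg _) (hf x (fun _ => true))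
    have hstep : |∑ τ : V → Bool, (q' x (τ x) - q x (τ x)) * W τ * f τ|
        ≤ |q' x true - q x true| * c := by
      refine single_site x (fun b => q' x b - q x b)
        (by show (q' x true - q x true) + (q' x false - q x false) = 0
            have := hq1 x; have := hq'1 x; linarith)
        W (fun τ => mul_nonneg (Finset.prod_nonneg fun y _ => hq'0 y (τ y))
          (Finset.prod_nonneg fun y _ => hq0 y (τ y)))
        (fun τ b => ?_) hWsum f c (fun ρ => hf x ρ)
      show (∏ y ∈ S, q' y (Function.update τ x b y))
            * ∏ y ∈ (insert x S)ᶜ, q y (Function.update τ x b y)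
          = (∏ y ∈ S, q' y (τ y)) * ∏ y ∈ (insert x S)ᶜ, q y (τ y)
      refine congrArg₂ (· * ·) ?_ ?_
      · refine Finset.prod_congr rfl fun y hy => ?_
        have : y ≠ x := fun hxy => hx (hxy ▸ hy)
        rw [Function.update_of_ne this]
      · refine Finset.prod_congr rfl fun y hy => ?_
        rw [Finset.mem_compl, Finset.mem_insert] at hy
        push_neg at hy
        rw [Function.update_of_ne hy.1]
    calc |(∑ τ : V → Bool, ((∏ y ∈ insert x S, q' y (τ y)) * ∏ y ∈ (insert x S)ᶜ, q y (τ y)) * f τ)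
          - ∑ τ : V → Bool, (∏ y, q y (τ y)) * f τ|
        ≤ |(∑ τ : V → Bool, ((∏ y ∈ insert x S, q' y (τ y)) * ∏ y ∈ (insert x S)ᶜ, q y (τ y)) * f τ)
            - ∑ τ : V → Bool, ((∏ y ∈ S, q' y (τ y)) * ∏ y ∈ Sᶜ, q y (τ y)) * f τ|
          + |(∑ τ : V → Bool, ((∏ y ∈ S, q' y (τ y)) * ∏ y ∈ Sᶜ, q y (τ y)) * f τ)
            - ∑ τ : V → Bool, (∏ y, q y (τ y)) * f τ| := abs_sub_le _ _ _
      _ ≤ |q' x true - q x true| * c + (∑ y ∈ S, |q' y true - q y true|) * c := by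
          rw [hdiff]; exact add_le_add hstep ih
      _ = (∑ y ∈ insert x S, |q' y true - q y true|) * c := by
          rw [Finset.sum_insert hx]; ring

section helpers
variable [Fintype V] [DecidableEq V]

lemma cavity_diff (J : V → V → ℝ) (h : V → ℝ) (σ σ' : V → Bool) (x : V)
    (hagree : ∀ z, z ≠ x → σ z = σ' z) (y : V) :
    cavity J h σ y - cavity J h σ' y = J y x * (sp (σ x) - sp (σ' x)) := by
  unfold cavity
  rw [add_sub_add_right_eq_sub, ← Finset.sum_sub_distrib]
  rw [Finset.sum_eq_single x]
  · ring
  · intro z _ hz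
    rw [hagree z hz]; ring
  · intro hx; exact absurd (Finset.mem_univ x) hx

lemma sum_siteK_diff_le (J : V → V → ℝ) (h : V → ℝ)
    (hsym : ∀ x y, J x y = J y x) (hJxx : ∀ x, J x x = 0)
    (β : ℝ) (hβ : 0 ≤ β) (ε : ℝ) (hε0 : 0 < ε) (hε1 : ε ≤ 1)
    (σ σ' : V → Bool) (x : V)
    (hagree : ∀ z, z ≠ x → σ z = σ' z) (hneq : σ x ≠ σ' x) :
    ∑ y, |siteK J h β ε σ' y true - siteK J h β ε σ y true|
      ≤ (1 - ε) + ε * ∑ y, Real.tanh (β * |J x y| / 2) := by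
  have habs : ∀ y : V, |siteK J h β ε σ' y true - siteK J h β ε σ y true|
      ≤ if y = x then 1 - ε else ε * Real.tanh (β * |J x y| / 2) := by
    intro y
    by_cases hyx : y = x
    · subst hyx
      have hcav : cavity J h σ y = cavity J h σ' y := by
        have := cavity_diff J h σ σ' y hagree y
        rw [hJxx y] at this
        linarith [this]
      have hsp : sp (σ' y) = - sp (σ y) := by
        cases hb : σ y <;> cases hb' : σ' y <;> simp_all [sp]
      have hpp : flipProb J h β σ y + flipProb J h β σ' y = 1 := by
        rw [flipProb_eq, flipProb_eq, hcav, hsp]; ring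
      rw [if_pos rfl]
      have hnn := flipProb_nonneg J h β σ y
      have hnn' := flipProb_nonneg J h β σ' y
      have hq : ε * flipProb J h β σ y + ε * flipProb J h β σ' y = ε := by
        have := congrArg (fun z => ε * z) hpp
        simpa [mul_add] using this
      unfold siteK
      cases hb : σ y <;> cases hb' : σ' y <;> simp_all
      · rw [abs_of_nonneg (by linarith)]; linarith
      · rw [abs_of_nonpos (by linarith)]; linarith
    · have hσy : σ y = σ' y := hagree y hyx
      have hcd : |cavity J h σ y - cavity J h σ' y| = 2 * |J y x| := by
        rw [cavity_diff J h σ σ' x hagree y, abs_mul]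
        have : |sp (σ x) - sp (σ' x)| = 2 := by
          cases hb : σ x <;> cases hb' : σ' x <;> simp_all [sp] <;> norm_num
        rw [this]; ring
      have hflip : |flipProb J h β σ' y - flipProb J h β σ y|
          ≤ Real.tanh (β * |J x y| / 2) := by
        rw [flipProb_eq, flipProb_eq, hσy]
        have hspy : |sp (σ' y)| = 1 := by cases σ' y <;> simp [sp]
        have : (1 - sp (σ' y) * Real.tanh (β / 2 * cavity J h σ' y)) / 2
            - (1 - sp (σ' y) * Real.tanh (β / 2 * cavity J h σ y)) / 2
            = sp (σ' y) * (Real.tanh (β / 2 * cavity J h σ y)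
              - Real.tanh (β / 2 * cavity J h σ' y)) / 2 := by ring
        rw [this, abs_div, abs_mul, hspy, one_mul]
        have h2 := abs_tanh_sub_le (β / 2 * cavity J h σ y) (β / 2 * cavity J h σ' y)
        have h3 : |β / 2 * cavity J h σ y - β / 2 * cavity J h σ' y|
            = β / 2 * (2 * |J y x|) := by
          rw [show β / 2 * cavity J h σ y - β / 2 * cavity J h σ' y
            = β / 2 * (cavity J h σ y - cavity J h σ' y) by ring, abs_mul,
            abs_of_nonneg (by linarith : (0:ℝ) ≤ β / 2), hcd]
        rw [h3] at h2
        have h4 : β / 2 * (2 * |J y x|) / 2 = β * |J x y| / 2 := by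
          rw [hsym y x]; ring
        rw [h4] at h2
        rw [abs_two]
        linarith
      rw [if_neg hyx]
      unfold siteK
      rw [hσy]
      by_cases hb : true = σ' y
      · rw [if_pos hb, if_pos hb]
        rw [show 1 - ε * flipProb J h β σ' y - (1 - ε * flipProb J h β σ y)
          = ε * (flipProb J h β σ y - flipProb J h β σ' y) by ring, abs_mul,
          abs_of_pos hε0, abs_sub_comm]
        exact mul_le_mul_of_nonneg_left hflip hε0.le
      · rw [if_neg hb, if_neg hb,
          show ε * flipProb J h β σ' y - ε * flipProb J h β σ y
            = ε * (flipProb J h β σ' y - flipProb J h β σ y) by ring, abs_mul,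
          abs_of_pos hε0]
        exact mul_le_mul_of_nonneg_left hflip hε0.le
  calc ∑ y, |siteK J h β ε σ' y true - siteK J h β ε σ y true|
      ≤ ∑ y, (if y = x then 1 - ε else ε * Real.tanh (β * |J x y| / 2)) :=
        Finset.sum_le_sum fun y _ => habs y
    _ = (1 - ε) + ε * ∑ y, Real.tanh (β * |J x y| / 2) := by
        have e1 : ∑ y, (if y = x then 1 - ε else ε * Real.tanh (β * |J x y| / 2))
            = (1 - ε) + ∑ y ∈ univ.erase x, ε * Real.tanh (β * |J x y| / 2) := by
          rw [← Finset.add_sum_erase _ _ (Finset.mem_univ x), if_pos rfl]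
          congr 1
          exact Finset.sum_congr rfl fun y hy => if_neg (Finset.ne_of_mem_erase hy)
        have e2 : ∑ y, Real.tanh (β * |J x y| / 2)
            = ∑ y ∈ univ.erase x, Real.tanh (β * |J x y| / 2) := by
          rw [← Finset.add_sum_erase _ _ (Finset.mem_univ x), hJxx x]
          simp
        rw [e1, e2, Finset.mul_sum]

lemma Peps_rowsum (J : V → V → ℝ) (h : V → ℝ) (β ε : ℝ) (σ : V → Bool) :
    ∑ τ, Peps J h β ε σ τ = 1 := by
  simp_rw [Peps_eq_prod]
  rw [sum_prod_bool]
  rw [Finset.prod_congr rfl fun y _ => siteK_sum J h β ε σ y]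
  exact Finset.prod_const_one

lemma kpow_rowsum (P : (V → Bool) → (V → Bool) → ℝ) (hP : ∀ σ, ∑ τ, P σ τ = 1)
    (t : ℕ) (σ : V → Bool) : ∑ τ, kpow P t σ τ = 1 := by
  induction t generalizing σ with
  | zero => simp [kpow]
  | succ n ih =>
    show ∑ τ, ∑ η, P σ η * kpow P n η τ = 1
    rw [Finset.sum_comm]
    calc ∑ η, ∑ τ, P σ η * kpow P n η τ = ∑ η : V → Bool, P σ η * 1 := by
          refine Finset.sum_congr rfl fun η _ => ?_
          rw [← Finset.mul_sum, ih η]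
      _ = 1 := by simp_rw [mul_one]; exact hP σ

lemma lip_step (J : V → V → ℝ) (h : V → ℝ)
    (hsym : ∀ x y, J x y = J y x) (hJxx : ∀ x, J x x = 0)
    (β : ℝ) (hβ : 0 ≤ β) (ε : ℝ) (hε0 : 0 < ε) (hε1 : ε ≤ 1)
    (r : ℝ) (hrb : ∀ x : V, (1 - ε) + ε * ∑ y, Real.tanh (β * |J x y| / 2) ≤ r)
    (f : (V → Bool) → ℝ) (c : ℝ) (hc : 0 ≤ c)
    (hf : ∀ x ρ, |f (Function.update ρ x true) - f (Function.update ρ x false)| ≤ c)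
    (x : V) (ρ : V → Bool) :
    |(∑ τ, Peps J h β ε (Function.update ρ x true) τ * f τ)
      - ∑ τ, Peps J h β ε (Function.update ρ x false) τ * f τ| ≤ r * c := by
  set σ1 := Function.update ρ x true with hσ1
  set σ0 := Function.update ρ x false with hσ0
  have hagree : ∀ z, z ≠ x → σ1 z = σ0 z := fun z hz => by
    rw [hσ1, hσ0, Function.update_of_ne hz, Function.update_of_ne hz]
  have hneq : σ1 x ≠ σ0 x := by
    rw [hσ1, hσ0, Function.update_self, Function.update_self]; simp
  have hb := hybrid_bound (siteK J h β ε σ1) (siteK J h β ε σ0)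
    (fun y b => siteK_nonneg J h β ε hε0.le hε1 σ1 y b)
    (fun y b => siteK_nonneg J h β ε hε0.le hε1 σ0 y b)
    (fun y => siteK_sum J h β ε σ1 y) (fun y => siteK_sum J h β ε σ0 y)
    f c hf Finset.univ
  rw [Finset.compl_univ] at hb
  simp only [Finset.prod_empty, mul_one] at hb
  have e1 : ∀ τ, Peps J h β ε σ1 τ = ∏ y, siteK J h β ε σ1 y (τ y) :=
    fun τ => Peps_eq_prod J h β ε σ1 τ
  have e0 : ∀ τ, Peps J h β ε σ0 τ = ∏ y, siteK J h β ε σ0 y (τ y) :=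
    fun τ => Peps_eq_prod J h β ε σ0 τ
  simp_rw [e1, e0]
  rw [abs_sub_comm]
  refine hb.trans ?_
  have hsum := sum_siteK_diff_le J h hsym hJxx β hβ ε hε0 hε1 σ1 σ0 x hagree hneq
  exact mul_le_mul_of_nonneg_right (hsum.trans (hrb x)) hc

lemma lip_kpow (J : V → V → ℝ) (h : V → ℝ)
    (hsym : ∀ x y, J x y = J y x) (hJxx : ∀ x, J x x = 0)
    (β : ℝ) (hβ : 0 ≤ β) (ε : ℝ) (hε0 : 0 < ε) (hε1 : ε ≤ 1)
    (r : ℝ) (hr0 : 0 ≤ r)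
    (hrb : ∀ x : V, (1 - ε) + ε * ∑ y, Real.tanh (β * |J x y| / 2) ≤ r)
    (f : (V → Bool) → ℝ) (c : ℝ) (hc : 0 ≤ c)
    (hf : ∀ x ρ, |f (Function.update ρ x true) - f (Function.update ρ x false)| ≤ c)
    (t : ℕ) (x : V) (ρ : V → Bool) :
    |(∑ τ, kpow (Peps J h β ε) t (Function.update ρ x true) τ * f τ)
      - ∑ τ, kpow (Peps J h β ε) t (Function.update ρ x false) τ * f τ| ≤ r ^ t * c := by
  induction t generalizing f c x ρ with
  | zero =>
    simp only [kpow, pow_zero, one_mul]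
    have : ∀ σ : V → Bool, ∑ τ, (if σ = τ then (1:ℝ) else 0) * f τ = f σ := by
      intro σ
      rw [Finset.sum_congr rfl (fun τ _ => by
        rw [show ((if σ = τ then (1:ℝ) else 0) * f τ) = if σ = τ then f τ else 0 by
          split <;> simp])]
      rw [Finset.sum_ite_eq]
      simp
    rw [this, this]
    exact hf x ρ
  | succ n ih =>
    have hstep : ∀ σ : V → Bool,
        ∑ τ, kpow (Peps J h β ε) (n+1) σ τ * f τ
        = ∑ η, Peps J h β ε σ η * (∑ τ, kpow (Peps J h β ε) n η τ * f τ) := by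
      intro σ
      show ∑ τ, (∑ η, Peps J h β ε σ η * kpow (Peps J h β ε) n η τ) * f τ = _
      simp_rw [Finset.sum_mul]
      rw [Finset.sum_comm]
      refine Finset.sum_congr rfl fun η _ => ?_
      rw [Finset.mul_sum]
      exact Finset.sum_congr rfl fun τ _ => by ring
    rw [hstep, hstep]
    have hlip := lip_step J h hsym hJxx β hβ ε hε0 hε1 r hrb
      (fun η => ∑ τ, kpow (Peps J h β ε) n η τ * f τ) (r ^ n * c)
      (by positivity) (fun x' ρ' => ih f c hc hf x' ρ') x ρ
    calc |(∑ η, Peps J h β ε (Function.update ρ x true) η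
            * ∑ τ, kpow (Peps J h β ε) n η τ * f τ)
          - ∑ η, Peps J h β ε (Function.update ρ x false) η
            * ∑ τ, kpow (Peps J h β ε) n η τ * f τ|
        ≤ r * (r ^ n * c) := hlip
      _ = r ^ (n + 1) * c := by ring

lemma lip_pair (g : (V → Bool) → ℝ) (c : ℝ) (hc : 0 ≤ c)
    (hg : ∀ x ρ, |g (Function.update ρ x true) - g (Function.update ρ x false)| ≤ c)
    (x : V) (ρ : V → Bool) (a b : Bool) :
    |g (Function.update ρ x a) - g (Function.update ρ x b)| ≤ c := by
  cases a <;> cases b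
  · simp [hc]
  · rw [abs_sub_comm]; exact hg x ρ
  · exact hg x ρ
  · simp [hc]

lemma lip_global (g : (V → Bool) → ℝ) (c : ℝ) (hc : 0 ≤ c)
    (hg : ∀ x ρ, |g (Function.update ρ x true) - g (Function.update ρ x false)| ≤ c)
    (σ τ : V → Bool) :
    |g σ - g τ| ≤ c * (Fintype.card V : ℝ) := by
  have claim : ∀ S : Finset V,
      |g σ - g (fun z => if z ∈ S then τ z else σ z)| ≤ c * (S.card : ℝ) := by
    intro S
    induction S using Finset.induction_on with
    | empty => simp
    | @insert x S hx ih =>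
      set uS : V → Bool := fun z => if z ∈ S then τ z else σ z with huS
      set uI : V → Bool := fun z => if z ∈ insert x S then τ z else σ z with huI
      have h1 : uI = Function.update uS x (τ x) := by
        funext z
        by_cases hz : z = x
        · subst hz; rw [Function.update_self, huI]; simp
        · rw [Function.update_of_ne hz, huI, huS]
          simp only [Finset.mem_insert]
          by_cases hzS : z ∈ S <;> simp [hzS, hz]
      have h2 : uS = Function.update uS x (σ x) := by
        funext z
        by_cases hz : z = x
        · subst hz; rw [Function.update_self, huS]; simp [hx]
        · rw [Function.update_of_ne hz]
      have h3 : |g uS - g uI| ≤ c := by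
        rw [h1]
        nth_rewrite 1 [h2]
        exact lip_pair g c hc hg x uS (σ x) (τ x)
      calc |g σ - g uI| ≤ |g σ - g uS| + |g uS - g uI| := abs_sub_le _ _ _
        _ ≤ c * (S.card : ℝ) + c := add_le_add ih h3
        _ = c * ((insert x S).card : ℝ) := by
            rw [Finset.card_insert_of_notMem hx]; push_cast; ring
  have := claim Finset.univ
  simpa using this

end helpers

/-- with `r = (1−ε) + ε·max_u ∑_y tanh(β|J_{u,y}|/2) < 1`, for all σ, τ and
every t ∈ ℕ, `‖P^t_{β,ε}(σ,·) − P^t_{β,ε}(τ,·)‖_TV ≤ r^t · |V|`. -/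
theorem epsSCA_tv_contraction [Fintype V] [DecidableEq V] [Nonempty V]
    (G : SimpleGraph V) (J : V → V → ℝ) (h : V → ℝ)
    (hsym : ∀ x y, J x y = J y x)
    (hJG : ∀ x y, ¬ G.Adj x y → J x y = 0)
    (β : ℝ) (hβ : 0 ≤ β) (ε : ℝ) (hε : ε ∈ Set.Ioc (0 : ℝ) 1)
    (r : ℝ)
    (hr : r = (1 - ε) + ε * univ.sup' univ_nonempty (fun u => ∑ y, Real.tanh (β * |J u y| / 2)))
    (hr1 : r < 1)
    (σ τ : V → Bool) (t : ℕ) :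
    tvDist (kpow (Peps J h β ε) t σ) (kpow (Peps J h β ε) t τ) ≤ r ^ t * (Fintype.card V : ℝ) := by
  obtain ⟨hε0, hε1⟩ := hε
  have hJxx : ∀ x, J x x = 0 := fun x => hJG x x (G.irrefl)
  have hsumnn : ∀ x : V, 0 ≤ ∑ y, Real.tanh (β * |J x y| / 2) := by
    intro x
    refine Finset.sum_nonneg fun y _ => tanh_nonneg' ?_
    positivity
  have hrb : ∀ x : V, (1 - ε) + ε * ∑ y, Real.tanh (β * |J x y| / 2) ≤ r := by
    intro x
    rw [hr]
    refine add_le_add (le_refl _) (mul_le_mul_of_nonneg_left ?_ hε0.le)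
    exact Finset.le_sup' (fun u => ∑ y, Real.tanh (β * |J u y| / 2)) (Finset.mem_univ x)
  have hr0 : 0 ≤ r := by
    have := hrb (Classical.arbitrary V)
    have h2 := hsumnn (Classical.arbitrary V)
    nlinarith [hε0.le]
  set P := Peps J h β ε with hP
  set A := kpow P t σ with hA
  set B := kpow P t τ with hB
  set f : (V → Bool) → ℝ := fun η => if B η ≤ A η then 1 else 0 with hf
  have hfl : ∀ x ρ, |f (Function.update ρ x true) - f (Function.update ρ x false)| ≤ 1 := by
    intro x ρ
    rw [hf]
    simp only
    split_ifs <;> norm_num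
  set g : (V → Bool) → ℝ := fun s => ∑ η, kpow P t s η * f η with hg
  have hglip : ∀ x ρ, |g (Function.update ρ x true) - g (Function.update ρ x false)|
      ≤ r ^ t * 1 :=
    fun x ρ => lip_kpow J h hsym hJxx β hβ ε hε0 hε1 r hr0 hrb f 1 zero_le_one hfl t x ρ
  have hgg : |g σ - g τ| ≤ (r ^ t * 1) * (Fintype.card V : ℝ) :=
    lip_global g (r ^ t * 1) (by positivity) hglip σ τ
  have hProw : ∀ s : V → Bool, ∑ η, P s η = 1 := fun s => Peps_rowsum J h β ε s
  have hAB : ∑ η, (A η - B η) = 0 := by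
    rw [Finset.sum_sub_distrib, hA, hB, kpow_rowsum P hProw, kpow_rowsum P hProw]
    ring
  have habs : ∀ η, |A η - B η| = 2 * (f η * (A η - B η)) - (A η - B η) := by
    intro η
    rw [hf]
    simp only
    split_ifs with hcase
    · rw [abs_of_nonneg (sub_nonneg.2 hcase)]; ring
    · rw [abs_of_neg (sub_neg.2 (lt_of_not_ge hcase))]; ring
  have htv : tvDist A B = g σ - g τ := by
    rw [tvDist]
    rw [Finset.sum_congr rfl fun η _ => habs η]
    rw [Finset.sum_sub_distrib, hAB, ← Finset.mul_sum]
    rw [hg]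
    simp only
    rw [← Finset.sum_sub_distrib]
    rw [Finset.sum_congr rfl (fun η _ => show f η * (A η - B η)
      = kpow P t σ η * f η - kpow P t τ η * f η by rw [hA, hB]; ring)]
    rw [Finset.sum_sub_distrib]
    ring
  rw [htv]
  calc g σ - g τ ≤ |g σ - g τ| := le_abs_self _
    _ ≤ (r ^ t * 1) * (Fintype.card V : ℝ) := hgg
    _ = r ^ t * (Fintype.card V : ℝ) := by ring
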